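/- The Holevo quantity equals the mutual information for classical-record states: let A be the classical system with single test E, let 𝔅 be a test space with state space containing states β_e for each e ∈ E, let p be a probability distribution on E, and let ω be the state on the Foulis–Randall product of {E} with 𝔅 given by ω(e,f) = p(e)·β_e(f). Then I(A:B) := H(ω^A) + H(ω^B) − H(ω) = H(ω^B) − Σ_{e∈E} p(e) H(β_e), where ω^B = Σ_e p(e) β_e and all entropies are measurement entropies. -/
import Mathlib


/-- Local measurement entropy of a state `α` at a test `E` (base-2 logarithm). -/
noncomputable def locEnt {X : Type*} (E : Finset X) (α : X → ℝ) : ℝ :=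
  ∑ x ∈ E, -(α x * Real.logb 2 (α x))

/-- Measurement entropy: infimum of local entropies over all tests of the test space. -/
noncomputable def measEnt {X : Type*} (𝔄 : Set (Finset X)) (α : X → ℝ) : ℝ :=
  sInf ((fun E => locEnt E α) '' 𝔄)

/-- A state on a test space: nonnegative on outcomes, summing to 1 on every test. -/
def IsState {X : Type*} (𝔄 : Set (Finset X)) (α : X → ℝ) : Prop :=
  (∀ E ∈ 𝔄, ∀ x ∈ E, 0 ≤ α x) ∧ (∀ E ∈ 𝔄, ∑ x ∈ E, α x = 1)

/-- The Foulis–Randall product of the classical test space `{E}` with a test space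
`𝔅`: its tests are the two-stage tests `{(e,f) : e ∈ E, f ∈ F e}`, one for each
choice of a test `F e ∈ 𝔅` for every `e`. -/
def frProd {Xa Y : Type*} [DecidableEq Xa] [DecidableEq Y]
    (E : Finset Xa) (𝔅 : Set (Finset Y)) : Set (Finset (Xa × Y)) :=
  {T | ∃ F : Xa → Finset Y, (∀ e ∈ E, F e ∈ 𝔅) ∧
    T = E.biUnion fun e => (F e).image fun f => (e, f)}

lemma neg_mul_logb_split (a b : ℝ) :
    -(a * b * Real.logb 2 (a * b)) =
      b * -(a * Real.logb 2 a) + a * -(b * Real.logb 2 b) := by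
  rcases eq_or_ne a 0 with ha | ha
  · simp [ha]
  rcases eq_or_ne b 0 with hb | hb
  · simp [hb]
  rw [Real.logb_mul ha hb]; ring

lemma locEnt_nonneg' {Y : Type*} (F : Finset Y) (α : Y → ℝ)
    (h0 : ∀ y ∈ F, 0 ≤ α y) (h1 : ∑ y ∈ F, α y = 1) : 0 ≤ locEnt F α := by
  apply Finset.sum_nonneg
  intro y hy
  have hle : α y ≤ 1 := h1 ▸ Finset.single_le_sum h0 hy
  have hlog : Real.logb 2 (α y) ≤ 0 := Real.logb_nonpos (by norm_num) (h0 y hy) hle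
  nlinarith [h0 y hy]

/-- for a classical-record state ω(e,f) = p(e)·β_e(f), the mutual
information I(A:B) = H(A) + H(B) − H(AB) equals the Holevo quantity
H(ω^B) − Σ_e p(e) H(β_e). -/
theorem holevo_quantity_eq_mutual_information {Xa Y : Type*}
    [DecidableEq Xa] [DecidableEq Y]
    (E : Finset Xa) (𝔅 : Set (Finset Y)) (h𝔅 : 𝔅.Nonempty)
    (p : Xa → ℝ) (hp : ∀ e ∈ E, 0 ≤ p e) (hpsum : ∑ e ∈ E, p e = 1)
    (β : Xa → Y → ℝ) (hβ : ∀ e ∈ E, IsState 𝔅 (β e))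
    (ω : Xa × Y → ℝ) (hω : ∀ x : Xa × Y, ω x = p x.1 * β x.1 x.2)
    (ωB : Y → ℝ) (hωB : ∀ f, ωB f = ∑ e ∈ E, p e * β e f) :
    locEnt E p + measEnt 𝔅 ωB - measEnt (frProd E 𝔅) ω =
      measEnt 𝔅 ωB - ∑ e ∈ E, p e * measEnt 𝔅 (β e) := by
  classical
  suffices hkey : measEnt (frProd E 𝔅) ω
      = locEnt E p + ∑ e ∈ E, p e * measEnt 𝔅 (β e) by
    rw [hkey]; ring
  -- local entropy of a product test
  have hcomp : ∀ F : Xa → Finset Y, (∀ e ∈ E, F e ∈ 𝔅) →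
      locEnt (E.biUnion fun e => (F e).image fun f => (e, f)) ω
        = locEnt E p + ∑ e ∈ E, p e * locEnt (F e) (β e) := by
    intro F hF
    unfold locEnt
    rw [Finset.sum_biUnion]
    · have hterm : ∀ e ∈ E,
          ∑ x ∈ (F e).image (fun f => (e, f)), -(ω x * Real.logb 2 (ω x))
            = -(p e * Real.logb 2 (p e)) + p e * locEnt (F e) (β e) := by
        intro e he
        rw [Finset.sum_image (by intro a _ b _ h; simpa using h)]
        have hstep : ∀ f ∈ F e, -(ω (e, f) * Real.logb 2 (ω (e, f)))
            = β e f * -(p e * Real.logb 2 (p e))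
              + p e * -(β e f * Real.logb 2 (β e f)) := by
          intro f hf
          rw [hω (e, f)]
          exact neg_mul_logb_split _ _
        rw [Finset.sum_congr rfl hstep, Finset.sum_add_distrib,
          ← Finset.sum_mul, ← Finset.mul_sum, (hβ e he).2 (F e) (hF e he), one_mul]
        rfl
      rw [Finset.sum_congr rfl hterm, Finset.sum_add_distrib]
      rfl
    · intro e he e' he' hne
      simp only [Function.onFun, Finset.disjoint_left, Finset.mem_image]
      rintro ⟨a, b⟩ ⟨f, hf, hfe⟩ ⟨f', hf', hfe'⟩
      exact hne ((Prod.ext_iff.mp hfe).1.trans (Prod.ext_iff.mp hfe').1.symm)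
  -- bounds for the B-side entropy sets
  have hBdd : ∀ e ∈ E, BddBelow ((fun F => locEnt F (β e)) '' 𝔅) := by
    intro e he
    refine ⟨0, ?_⟩
    rintro b ⟨F, hF, rfl⟩
    exact locEnt_nonneg' F (β e) ((hβ e he).1 F hF) ((hβ e he).2 F hF)
  have hm_le : ∀ e ∈ E, ∀ F ∈ 𝔅, measEnt 𝔅 (β e) ≤ locEnt F (β e) := by
    intro e he F hF
    exact csInf_le (hBdd e he) ⟨F, hF, rfl⟩
  have hm_nonneg : ∀ e ∈ E, 0 ≤ measEnt 𝔅 (β e) := by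
    intro e he
    obtain ⟨F, hF⟩ := h𝔅
    refine le_csInf ⟨_, ⟨F, hF, rfl⟩⟩ ?_
    rintro b ⟨G, hG, rfl⟩
    exact locEnt_nonneg' G (β e) ((hβ e he).1 G hG) ((hβ e he).2 G hG)
  -- the set of local entropies of product tests
  have hSne : ((fun T => locEnt T ω) '' frProd E 𝔅).Nonempty := by
    obtain ⟨F, hF⟩ := h𝔅
    exact ⟨_, ⟨_, ⟨fun _ => F, fun e _ => hF, rfl⟩, rfl⟩⟩
  have hSbdd : BddBelow ((fun T => locEnt T ω) '' frProd E 𝔅) := by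
    refine ⟨0, ?_⟩
    rintro b ⟨T, ⟨F, hF, rfl⟩, rfl⟩
    dsimp only
    rw [hcomp F hF]
    have h1 : 0 ≤ locEnt E p := locEnt_nonneg' E p hp hpsum
    have h2 : 0 ≤ ∑ e ∈ E, p e * locEnt (F e) (β e) := by
      apply Finset.sum_nonneg
      intro e he
      exact mul_nonneg (hp e he)
        (locEnt_nonneg' (F e) (β e) ((hβ e he).1 _ (hF e he)) ((hβ e he).2 _ (hF e he)))
    linarith
  apply le_antisymm
  · -- upper bound: for every ε > 0
    apply le_of_forall_pos_le_add
    intro ε hε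
    have hchoice : ∀ e ∈ E, ∃ F, F ∈ 𝔅 ∧ locEnt F (β e) < measEnt 𝔅 (β e) + ε := by
      intro e he
      obtain ⟨F0, hF0⟩ := h𝔅
      have hne : ((fun F => locEnt F (β e)) '' 𝔅).Nonempty := ⟨_, ⟨F0, hF0, rfl⟩⟩
      have hlt : measEnt 𝔅 (β e) < measEnt 𝔅 (β e) + ε := by linarith
      obtain ⟨b, ⟨F, hF, rfl⟩, hb⟩ := exists_lt_of_csInf_lt hne hlt
      exact ⟨F, hF, hb⟩
    choose! F hF1 hF2 using hchoice
    set F' : Xa → Finset Y := fun e => if e ∈ E then F e else h𝔅.choose with hF'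
    have hF'mem : ∀ e ∈ E, F' e ∈ 𝔅 := by
      intro e he; simp only [hF', if_pos he]; exact hF1 e he
    have hle : locEnt (E.biUnion fun e => (F' e).image fun f => (e, f)) ω
        ≤ locEnt E p + ∑ e ∈ E, p e * measEnt 𝔅 (β e) + ε := by
      rw [hcomp F' hF'mem]
      have : ∑ e ∈ E, p e * locEnt (F' e) (β e)
          ≤ ∑ e ∈ E, p e * (measEnt 𝔅 (β e) + ε) := by
        apply Finset.sum_le_sum
        intro e he
        refine mul_le_mul_of_nonneg_left ?_ (hp e he)
        have := hF2 e he
        simp only [hF', if_pos he]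
        linarith
      have heq : ∑ e ∈ E, p e * (measEnt 𝔅 (β e) + ε)
          = ∑ e ∈ E, p e * measEnt 𝔅 (β e) + ε := by
        simp only [mul_add]
        rw [Finset.sum_add_distrib, ← Finset.sum_mul, hpsum, one_mul]
      linarith
    calc measEnt (frProd E 𝔅) ω
        ≤ locEnt (E.biUnion fun e => (F' e).image fun f => (e, f)) ω :=
          csInf_le hSbdd ⟨_, ⟨F', hF'mem, rfl⟩, rfl⟩
      _ ≤ locEnt E p + ∑ e ∈ E, p e * measEnt 𝔅 (β e) + ε := hle
  · -- lower bound
    apply le_csInf hSne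
    rintro b ⟨T, ⟨F, hF, rfl⟩, rfl⟩
    dsimp only
    rw [hcomp F hF]
    have : ∑ e ∈ E, p e * measEnt 𝔅 (β e) ≤ ∑ e ∈ E, p e * locEnt (F e) (β e) := by
      apply Finset.sum_le_sum
      intro e he
      exact mul_le_mul_of_nonneg_left (hm_le e he (F e) (hF e he)) (hp e he)
    linarith
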